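/- Let p be a prime, let G = (ℤ/pℤ × (ℤ/pℤ)ˣ) ⋊ C₂ be the semidirect product where the nontrivial element of C₂ acts by inversion, with multiplication (a,b,c)(α,β,γ) = (a + αc, bβ^c, cγ) for c, γ ∈ {±1}. Let v = (0,1,−1), a_x = (0,x,1) for x ∈ (ℤ/pℤ)ˣ \ {1}, and b_x = (x,x,−1) for x ∈ (ℤ/pℤ)ˣ (where in b_x the first coordinate is the image of x in ℤ/pℤ). Then every element of G of the form (x,y,−1) is a product of at most two elements of the set T = {v} ∪ {a_x} ∪ {b_x}, and every element of the form (x,y,1) with y ≠ 1 is a product of at most two elements of T. -/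

import Mathlib

/-- The action of `ℤˣ = {±1}` on a commutative group `H` in which `-1` acts by the
inversion automorphism. -/
def invAut (H : Type*) [CommGroup H] : ℤˣ →* MulAut H where
  toFun u := if u = 1 then 1 else MulEquiv.inv H
  map_one' := by simp
  map_mul' a b := by
    rcases Int.units_eq_one_or a with ha | ha <;> rcases Int.units_eq_one_or b with hb | hb <;>
      subst ha <;> subst hb <;> ext h <;> simp [MulEquiv.inv] <;> exact (inv_inv h).symm

/-- The group `G = (ℤ/pℤ × (ℤ/pℤ)ˣ) ⋊ C₂`, with `C₂ = {±1}` acting by inversion;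
its multiplication rule is `(a,b,c)(α,β,γ) = (a + αc, bβ^c, cγ)`. -/
abbrev GDih (p : ℕ) : Type :=
  (Multiplicative (ZMod p) × (ZMod p)ˣ) ⋊[invAut (Multiplicative (ZMod p) × (ZMod p)ˣ)] ℤˣ

/-- The generator `v = (0, 1, -1)`. -/
def v (p : ℕ) : GDih p := ⟨(Multiplicative.ofAdd (0 : ZMod p), 1), -1⟩

/-- The generators `a_x = (0, x, 1)` for `x ∈ (ℤ/pℤ)ˣ`. -/
def a (p : ℕ) (x : (ZMod p)ˣ) : GDih p := ⟨(Multiplicative.ofAdd (0 : ZMod p), x), 1⟩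

/-- The generators `b_x = (x, x, -1)` for `x ∈ (ℤ/pℤ)ˣ` (in the first coordinate `x`
denotes the image of the unit `x` in `ℤ/pℤ`). -/
def b (p : ℕ) (x : (ZMod p)ˣ) : GDih p :=
  ⟨(Multiplicative.ofAdd ((x : ZMod p)), x), -1⟩

lemma invAut_neg_one {H : Type*} [CommGroup H] (h : H) : invAut H (-1) h = h⁻¹ := by
  simp [invAut, MulEquiv.inv]; rfl

lemma invAut_one' {H : Type*} [CommGroup H] (h : H) : invAut H 1 h = h := by simp [invAut]

lemma a_mul_v (p : ℕ) (y : (ZMod p)ˣ) :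
    a p y * v p = ⟨(Multiplicative.ofAdd (0 : ZMod p), y), -1⟩ := by
  refine SemidirectProduct.ext ?_ ?_ <;>
    simp [a, v, SemidirectProduct.mul_left, SemidirectProduct.mul_right, invAut_one']

lemma a_mul_b (p : ℕ) (t s : (ZMod p)ˣ) :
    a p t * b p s = ⟨(Multiplicative.ofAdd ((s : ZMod p)), t * s), -1⟩ := by
  refine SemidirectProduct.ext ?_ ?_ <;>
    simp [a, b, SemidirectProduct.mul_left, SemidirectProduct.mul_right, invAut_one']

lemma b_mul_b (p : ℕ) (z t : (ZMod p)ˣ) :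
    b p z * b p t = ⟨(Multiplicative.ofAdd ((z : ZMod p) - t), z * t⁻¹), 1⟩ := by
  refine SemidirectProduct.ext ?_ ?_ <;>
    simp [b, SemidirectProduct.mul_left, SemidirectProduct.mul_right, invAut_neg_one,
      ← ofAdd_neg, ← ofAdd_add, sub_eq_add_neg]

/-- **Coverage step of Lemma 1.** With `T = {v} ∪ {a_x : x ≠ 1} ∪ {b_x}`, every element
`(x, y, -1)` of `G`, and every element `(x, y, 1)` with `y ≠ 1`, is a product of at most
two elements of `T`. -/
theorem coverage_of_generators (p : ℕ) (hp : p.Prime)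
    (T : Set (GDih p))
    (hT : T = {v p} ∪ {g | ∃ x : (ZMod p)ˣ, x ≠ 1 ∧ g = a p x} ∪
      {g | ∃ x : (ZMod p)ˣ, g = b p x}) :
    ∀ g : GDih p, (g.right = -1 ∨ (g.right = 1 ∧ g.left.2 ≠ 1)) →
      g ∈ T ∨ ∃ s ∈ T, ∃ t ∈ T, g = s * t := by
  haveI := Fact.mk hp
  subst hT
  rintro ⟨⟨x, y⟩, c⟩ h
  simp only [Set.mem_union, Set.mem_singleton_iff, Set.mem_setOf_eq]
  rcases h with hc | ⟨hc, hy⟩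
  · obtain rfl : c = -1 := hc
    by_cases hx : Multiplicative.toAdd x = 0
    · have hx1 : x = Multiplicative.ofAdd (0 : ZMod p) := by
        rw [← hx]; rfl
      by_cases hy : y = 1
      · left
        exact Or.inl (Or.inl (by rw [hx1, hy]; rfl))
      · right
        refine ⟨a p y, Or.inl (Or.inr ⟨y, hy, rfl⟩), v p, Or.inl (Or.inl rfl), ?_⟩
        rw [a_mul_v, hx1]
    · set xu : (ZMod p)ˣ := Units.mk0 (Multiplicative.toAdd x) hx with hxu
      have hxval : (xu : ZMod p) = Multiplicative.toAdd x := rfl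
      have hxofAdd : Multiplicative.ofAdd ((xu : ZMod p)) = x := rfl
      by_cases hy : y = xu
      · left
        refine Or.inr ⟨xu, ?_⟩
        rw [b, hxofAdd, hy]
      · right
        refine ⟨a p (y * xu⁻¹), Or.inl (Or.inr ⟨y * xu⁻¹, ?_, rfl⟩),
          b p xu, Or.inr ⟨xu, rfl⟩, ?_⟩
        · intro h
          exact hy (by rw [← mul_inv_cancel_right y xu⁻¹] at *; group at *; simpa using
            (eq_of_div_eq_one (by simpa [div_eq_mul_inv] using h)))
        · rw [a_mul_b, hxofAdd, inv_mul_cancel_right]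
  · obtain rfl : c = 1 := hc
    have hy' : y ≠ 1 := hy
    by_cases hx : Multiplicative.toAdd x = 0
    · have hx1 : x = Multiplicative.ofAdd (0 : ZMod p) := by rw [← hx]; rfl
      left
      exact Or.inl (Or.inr ⟨y, hy', by rw [a, hx1]⟩)
    · right
      have hy1 : (y : ZMod p) - 1 ≠ 0 := sub_ne_zero.mpr fun h => hy' (Units.ext h)
      set t : (ZMod p)ˣ := Units.mk0 (Multiplicative.toAdd x * ((y : ZMod p) - 1)⁻¹)
        (mul_ne_zero hx (inv_ne_zero hy1)) with ht
      refine ⟨b p (y * t), Or.inr ⟨y * t, rfl⟩, b p t, Or.inr ⟨t, rfl⟩, ?_⟩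
      have hval : ((y * t : (ZMod p)ˣ) : ZMod p) - (t : ZMod p) = Multiplicative.toAdd x := by
        have h2 : (t : ZMod p) = Multiplicative.toAdd x * ((y : ZMod p) - 1)⁻¹ := rfl
        rw [Units.val_mul, h2]
        field_simp
      rw [b_mul_b, mul_inv_cancel_right, hval, ofAdd_toAdd]
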